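/- Quantitative asymptotics of the Fresnel quadrature weights at lattice points: let k > 0, z > 0, δ > 0 be real, let m be a nonzero integer, and set W = 1/(2δ), κ = π²z/(kδ²), t = z/(k m² δ²). Define φ(X) = δ ∫_{−W}^{W} exp(−i(2π²z/k)ξ²) e^{2πiXξ} dξ. Then | φ(mδ) − ( −i(−1)^m · t · e^{−iκ/2} ) | ≤ t² + κ t. -/

import Mathlib

open Real

/-- Quantitative asymptotics of the Fresnel sinc-quadrature weights at lattice points:
for `m ≠ 0`, with `W = 1/(2δ)`, `κ = π²z/(kδ²)`, `t = z/(km²δ²)`, and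
`φ(X) = δ ∫_{−W}^{W} exp(−i(2π²z/k)ξ²) e^{2πiXξ} dξ`, one has
`|φ(mδ) − (−i(−1)^m t e^{−iκ/2})| ≤ t² + κt`. -/
theorem fresnel_weight_asymptotics (k z δ : ℝ) (hk : 0 < k) (hz : 0 < z) (hδ : 0 < δ)
    (m : ℤ) (hm : m ≠ 0) (W κ t : ℝ)
    (hW : W = 1 / (2 * δ)) (hκ : κ = π ^ 2 * z / (k * δ ^ 2))
    (ht : t = z / (k * (m : ℝ) ^ 2 * δ ^ 2))
    (φ : ℝ → ℂ)
    (hφ : ∀ X : ℝ, φ X = (δ : ℂ) * ∫ ξ in (-W)..W,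
      Complex.exp (-Complex.I * (2 * (π : ℂ) ^ 2 * z / k) * ξ ^ 2) *
        Complex.exp (2 * (π : ℂ) * Complex.I * X * ξ)) :
    ‖φ ((m : ℝ) * δ) -
        -Complex.I * (-1 : ℂ) ^ m * (t : ℂ) * Complex.exp (-Complex.I * κ / 2)‖ ≤
      t ^ 2 + κ * t := by
  have hk0 : k ≠ 0 := ne_of_gt hk
  have hδ0 : δ ≠ 0 := ne_of_gt hδ
  have hm0 : (m : ℝ) ≠ 0 := Int.cast_ne_zero.mpr hm
  have hπ0 : π ≠ 0 := Real.pi_ne_zero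
  have hκpos : 0 < κ := by rw [hκ]; positivity
  have htpos : 0 < t := by
    rw [ht]
    have h2m : 0 < (m:ℝ)^2 := by positivity
    positivity
  have hκ0 : (κ:ℂ) ≠ 0 := by exact_mod_cast ne_of_gt hκpos
  have hmC : ((m:ℤ):ℂ) ≠ 0 := by exact_mod_cast hm0
  -- the rescaled integrand
  set f : ℝ → ℂ := fun u =>
    Complex.exp (-2 * Complex.I * (κ:ℂ) * (u:ℂ) ^ 2) *
      Complex.exp (2 * (π:ℂ) * Complex.I * (m:ℂ) * (u:ℂ)) with hf
  -- relation κ δ² = π² z / k  (over ℂ)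
  have hκδ : (κ:ℂ) * (δ:ℂ)^2 = (π:ℂ)^2 * (z:ℂ) / (k:ℂ) := by
    have h : κ * δ^2 = π^2 * z / k := by rw [hκ]; field_simp
    exact_mod_cast congrArg Complex.ofReal h
  -- relation t π² m² = κ (over ℂ)
  have htκ : (t:ℂ) * (π:ℂ)^2 * (m:ℂ)^2 = (κ:ℂ) := by
    have h : t * π^2 * (m:ℝ)^2 = κ := by rw [ht, hκ]; field_simp
    exact_mod_cast congrArg Complex.ofReal h
  -- Step A: change of variables
  have hA : φ ((m:ℝ) * δ) = ∫ u in (-(1:ℝ)/2)..(1/2), f u := by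
    rw [hφ]
    have h1 : ∀ ξ : ℝ,
        Complex.exp (-Complex.I * (2 * (π:ℂ)^2 * z / k) * (ξ:ℂ)^2) *
          Complex.exp (2 * (π:ℂ) * Complex.I * (((m:ℝ) * δ : ℝ):ℂ) * (ξ:ℂ)) = f (δ * ξ) := by
      intro ξ
      simp only [hf]
      push_cast
      congr 1
      · congr 1
        linear_combination (2 * Complex.I * (ξ:ℂ)^2) * hκδ
      · congr 1
        ring
    simp only [h1]
    rw [intervalIntegral.integral_comp_mul_left f hδ0]
    have h2 : δ * -W = -(1:ℝ)/2 := by rw [hW]; field_simp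
    have h3 : δ * W = (1:ℝ)/2 := by rw [hW]; field_simp
    rw [h2, h3, Complex.real_smul, ← mul_assoc, Complex.ofReal_inv,
      mul_inv_cancel₀ (by exact_mod_cast hδ0 : (δ:ℂ) ≠ 0), one_mul]
  -- the antiderivative
  set c : ℂ := (π:ℂ) * (m:ℂ) / (2 * (κ:ℂ)) with hc
  set H : ℝ → ℂ := fun u => -Complex.I * (t:ℂ) * ((u:ℂ) + c) * f u with hH
  have hderiv : ∀ u : ℝ, HasDerivAt H
      ((1 - Complex.I * (t:ℂ)) * f u - (4*κ*t : ℂ) * ((u:ℂ)^2 * f u)) u := by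
    intro u
    have h1 : HasDerivAt (fun x : ℝ => -Complex.I * (t:ℂ) * ((x:ℂ) + c))
        (-Complex.I * (t:ℂ) * 1) u := by
      exact (((hasDerivAt_id u).ofReal_comp).add_const c).const_mul _
    have hsq : HasDerivAt (fun x : ℝ => ((x:ℂ))^2) (2*(u:ℂ)) u := by
      have := (hasDerivAt_pow 2 u).ofReal_comp
      have h' : HasDerivAt (fun x : ℝ => ((x^2 : ℝ):ℂ)) (((2 * u ^ 1 : ℝ)):ℂ) u := by
        exact_mod_cast this
      simp only [Complex.ofReal_pow] at h'
      convert h' using 1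
      push_cast; ring
    have h2i : HasDerivAt (fun x : ℝ => -2 * Complex.I * (κ:ℂ) * (x:ℂ)^2)
        (-2 * Complex.I * (κ:ℂ) * (2 * (u:ℂ))) u := hsq.const_mul _
    have h2 := h2i.cexp
    have h3i : HasDerivAt (fun x : ℝ => 2 * (π:ℂ) * Complex.I * (m:ℂ) * (x:ℂ))
        (2 * (π:ℂ) * Complex.I * (m:ℂ) * 1) u :=
      ((hasDerivAt_id u).ofReal_comp).const_mul _
    have h3 := h3i.cexp
    have key := h1.mul (h2.mul h3)
    refine key.congr_deriv ?_
    symm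
    simp only [hf, Pi.mul_apply]
    set A := Complex.exp (-2 * Complex.I * (κ:ℂ) * (u:ℂ)^2)
    set B := Complex.exp (2 * (π:ℂ) * Complex.I * (m:ℂ) * (u:ℂ))
    rw [hc]
    field_simp
    ring_nf
    simp only [Complex.I_sq]
    linear_combination (-A*B) * htκ
  have hcont2 : Continuous (fun u : ℝ => (1 - Complex.I * (t:ℂ)) * f u -
      (4*κ*t : ℂ) * ((u:ℂ)^2 * f u)) := by fun_prop
  have key := intervalIntegral.integral_eq_sub_of_hasDerivAt
    (f := H) (a := -(1:ℝ)/2) (b := 1/2)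
    (fun u _ => hderiv u) (hcont2.intervalIntegrable _ _)
  have hint1 : IntervalIntegrable (fun u : ℝ => (1 - Complex.I * (t:ℂ)) * f u)
      MeasureTheory.volume (-(1:ℝ)/2) (1/2) :=
    Continuous.intervalIntegrable (by fun_prop) _ _
  have hint2 : IntervalIntegrable (fun u : ℝ => (4*κ*t : ℂ) * ((u:ℂ)^2 * f u))
      MeasureTheory.volume (-(1:ℝ)/2) (1/2) :=
    Continuous.intervalIntegrable (by fun_prop) _ _
  rw [intervalIntegral.integral_sub hint1 hint2,
    intervalIntegral.integral_const_mul, intervalIntegral.integral_const_mul] at key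
  set Φ : ℂ := ∫ u in (-(1:ℝ)/2)..(1/2), f u with hΦ
  set J : ℂ := ∫ u in (-(1:ℝ)/2)..(1/2), (u:ℂ)^2 * f u with hJ
  set M : ℂ := -Complex.I * (-1 : ℂ) ^ m * (t : ℂ) * Complex.exp (-Complex.I * κ / 2) with hM
  -- endpoint evaluation
  have hneg1 : ((-1:ℂ))^(-m) = (-1:ℂ)^m := by
    rw [zpow_neg, ← inv_zpow, inv_neg, inv_one]
  have e1 : Complex.exp (-2 * Complex.I * (κ:ℂ) * (((1:ℝ)/2 : ℝ):ℂ)^2) =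
      Complex.exp (-Complex.I * κ / 2) := by
    congr 1; push_cast; ring
  have e1' : Complex.exp (-2 * Complex.I * (κ:ℂ) * ((-(1:ℝ)/2 : ℝ):ℂ)^2) =
      Complex.exp (-Complex.I * κ / 2) := by
    congr 1; push_cast; ring
  have e2 : Complex.exp (2 * (π:ℂ) * Complex.I * (m:ℂ) * (((1:ℝ)/2 : ℝ):ℂ)) = (-1:ℂ)^m := by
    rw [show (2 * (π:ℂ) * Complex.I * (m:ℂ) * (((1:ℝ)/2 : ℝ):ℂ)) = (m:ℂ) * ((π:ℂ) * Complex.I) by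
      push_cast; ring]
    rw [Complex.exp_int_mul, Complex.exp_pi_mul_I]
  have e3 : Complex.exp (2 * (π:ℂ) * Complex.I * (m:ℂ) * ((-(1:ℝ)/2 : ℝ):ℂ)) = (-1:ℂ)^m := by
    rw [show (2 * (π:ℂ) * Complex.I * (m:ℂ) * ((-(1:ℝ)/2 : ℝ):ℂ)) =
        ((-m : ℤ):ℂ) * ((π:ℂ) * Complex.I) by push_cast; ring]
    rw [Complex.exp_int_mul, Complex.exp_pi_mul_I, hneg1]
  have hHval : H (1/2) - H (-(1:ℝ)/2) = M := by
    simp only [hH, hf]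
    rw [e1, e2, e1', e3, hM]
    push_cast
    ring
  rw [hHval] at key
  -- solve for Φ - M
  have hne : (1 - Complex.I * (t:ℂ)) ≠ 0 := by
    intro h
    have := congrArg Complex.re h
    simp at this
  have hq : Φ - M = (Complex.I * (t:ℂ) * M + (4*κ*t : ℂ) * J) / (1 - Complex.I * (t:ℂ)) := by
    rw [eq_div_iff hne]
    linear_combination key
  -- absolute value estimates
  have habsM : ‖M‖ = t := by
    rw [hM, show (-Complex.I * (κ:ℂ) / 2) = ((-κ/2 : ℝ):ℂ) * Complex.I by push_cast; ring,
      norm_mul, Complex.norm_exp_ofReal_mul_I, mul_one]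
    simp [norm_mul, norm_zpow, abs_of_pos htpos]
  have hfabs : ∀ u : ℝ, ‖f u‖ = 1 := by
    intro u
    simp only [hf]
    rw [show (-2 * Complex.I * (κ:ℂ) * (u:ℂ)^2) = ((-2*κ*u^2 : ℝ):ℂ) * Complex.I by
        push_cast; ring,
      show (2*(π:ℂ)*Complex.I*(m:ℂ)*(u:ℂ)) = ((2*π*m*u : ℝ):ℂ) * Complex.I by push_cast; ring,
      norm_mul, Complex.norm_exp_ofReal_mul_I, Complex.norm_exp_ofReal_mul_I, mul_one]
  have habsJ : ‖J‖ ≤ 1/12 := by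
    rw [hJ]
    have hb : ‖∫ u in (-(1:ℝ)/2)..(1/2), (u:ℂ)^2 * f u‖ ≤
        ∫ u in (-(1:ℝ)/2)..(1/2), ‖(u:ℂ)^2 * f u‖ :=
      intervalIntegral.norm_integral_le_integral_norm (by norm_num)
    have heq : (∫ u in (-(1:ℝ)/2)..(1/2), ‖(u:ℂ)^2 * f u‖) =
        ∫ u in (-(1:ℝ)/2)..(1/2), u^2 := by
      apply intervalIntegral.integral_congr
      intro u _
      show ‖(u:ℂ)^2 * f u‖ = u^2
      rw [norm_mul, norm_pow, Complex.norm_real, Real.norm_eq_abs, hfabs, mul_one, sq_abs]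
    calc ‖∫ u in (-(1:ℝ)/2)..(1/2), (u:ℂ)^2 * f u‖ ≤
        ∫ u in (-(1:ℝ)/2)..(1/2), ‖(u:ℂ)^2 * f u‖ := hb
      _ = ∫ u in (-(1:ℝ)/2)..(1/2), u^2 := heq
      _ = 1/12 := by rw [integral_pow]; norm_num
  -- final estimate
  rw [hA, hq, norm_div]
  have hd : 1 ≤ ‖1 - Complex.I * (t:ℂ)‖ := by
    have h1 : |(1 - Complex.I * (t:ℂ)).re| ≤ ‖1 - Complex.I * (t:ℂ)‖ :=
      Complex.abs_re_le_norm _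
    simpa using h1
  have hnum : ‖Complex.I * (t:ℂ) * M + (4*κ*t : ℂ) * J‖ ≤ t^2 + κ*t := by
    calc ‖Complex.I * (t:ℂ) * M + (4*κ*t : ℂ) * J‖ ≤
        ‖Complex.I * (t:ℂ) * M‖ + ‖(4*κ*t : ℂ) * J‖ :=
          norm_add_le _ _
      _ = t * t + (4*κ*t) * ‖J‖ := by
          have hAM : ‖Complex.I * (t:ℂ) * M‖ = t * t := by
            rw [norm_mul, norm_mul, habsM, Complex.norm_I, one_mul, Complex.norm_real, Real.norm_eq_abs,
              abs_of_pos htpos]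
          have hBJ : ‖(4*κ*t : ℂ) * J‖ = (4*κ*t) * ‖J‖ := by
            rw [norm_mul, show ((4*(κ:ℂ)*(t:ℂ))) = (((4*κ*t : ℝ)):ℂ) by push_cast; ring,
              Complex.norm_real, Real.norm_eq_abs, abs_of_pos (by positivity)]
          rw [hAM, hBJ]
      _ ≤ t * t + (4*κ*t) * (1/12) := by
          have h4 : (0:ℝ) ≤ 4*κ*t := by positivity
          nlinarith [habsJ]
      _ ≤ t^2 + κ*t := by nlinarith [htpos.le, hκpos.le]
  calc ‖Complex.I * (t:ℂ) * M + (4*κ*t : ℂ) * J‖ /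
      ‖1 - Complex.I * (t:ℂ)‖ ≤
      ‖Complex.I * (t:ℂ) * M + (4*κ*t : ℂ) * J‖ :=
        div_le_self (norm_nonneg _) hd
    _ ≤ t^2 + κ*t := hnum
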